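/- Fix integers m ≥ 1 and h ≥ 1, points θ₁, …, θ_{2m} ∈ [−π, π], positive reals S₁, …, S_{2m} > 0, and a real P. For θ ∈ ℝ let A(θ) = (cos θ, cos 2θ, …, cos hθ) ∈ ℝ^h and B(θ) = (sin θ, sin 2θ, …, sin hθ) ∈ ℝ^h, and for (λ, η, η₀) ∈ ℝ × ℝ^h × ℝ define r_i²(λ, η, η₀) = (2λS_i + η·A(θ_i) + η₀)² + (η·B(θ_i))². Then the function g̃(λ, η, η₀, ν) = (1/(2m))·Σ_{i=1}^{2m} [ (1/2)·log(2λS_i − ν_i) + λS_i − r_i²(λ, η, η₀)/(2ν_i) − λP + η₀ + 1/2 ] is concave on the convex domain { (λ, η, η₀, ν) ∈ ℝ × ℝ^h × ℝ × ℝ^{2m} : λ > 0, ν_i > 0 and 2λS_i − ν_i > 0 for all i }. -/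

import Mathlib

open Real Finset

/-- Concavity of the discretized dual objective `g̃` of the
feedback-capacity upper-bound problem on its convex domain. -/
lemma convex_pos' (a b p q : ℝ) (ha : 0 ≤ a) (hb : 0 ≤ b) (hab : a + b = 1)
    (hp : 0 < p) (hq : 0 < q) : 0 < a * p + b * q := by
  rcases ha.lt_or_eq with h | h
  · have h1 : 0 < a * p := mul_pos h hp
    nlinarith [mul_nonneg hb hq.le]
  · have hb1 : b = 1 := by linarith
    simp [← h, hb1, hq]

lemma sq_div_le' (u1 u2 p q a b : ℝ) (hp : 0 < p) (hq : 0 < q)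
    (ha : 0 ≤ a) (hb : 0 ≤ b) (hab : a + b = 1) :
    (a * u1 + b * u2) ^ 2 / (a * p + b * q) ≤ a * (u1 ^ 2 / p) + b * (u2 ^ 2 / q) := by
  have hpq : 0 < a * p + b * q := convex_pos' a b p q ha hb hab hp hq
  have hrw : a * (u1 ^ 2 / p) + b * (u2 ^ 2 / q) = (a * u1 ^ 2 * q + b * u2 ^ 2 * p) / (p * q) := by
    field_simp
  rw [hrw, div_le_div_iff₀ hpq (mul_pos hp hq)]
  nlinarith [mul_nonneg (mul_nonneg ha hb) (sq_nonneg (u1 * q - u2 * p))]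

lemma key' (a b ν1 ν2 L1 L2 u1 u2 v1 v2 r1 r2 : ℝ)
    (ha : 0 ≤ a) (hb : 0 ≤ b) (hab : a + b = 1)
    (hν1 : 0 < ν1) (hν2 : 0 < ν2) (hL1 : 0 < L1) (hL2 : 0 < L2) :
    a * ((1/2) * Real.log L1 + r1 - (u1^2 + v1^2) / (2*ν1))
      + b * ((1/2) * Real.log L2 + r2 - (u2^2 + v2^2) / (2*ν2))
    ≤ (1/2) * Real.log (a*L1 + b*L2) + (a*r1 + b*r2)
      - ((a*u1 + b*u2)^2 + (a*v1 + b*v2)^2) / (2*(a*ν1 + b*ν2)) := by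
  have hνc : 0 < a * ν1 + b * ν2 := convex_pos' a b ν1 ν2 ha hb hab hν1 hν2
  have hlog : a * Real.log L1 + b * Real.log L2 ≤ Real.log (a*L1 + b*L2) := by
    have := strictConcaveOn_log_Ioi.concaveOn.2 (Set.mem_Ioi.2 hL1) (Set.mem_Ioi.2 hL2) ha hb hab
    simpa [smul_eq_mul] using this
  have hu := sq_div_le' u1 u2 ν1 ν2 a b hν1 hν2 ha hb hab
  have hv := sq_div_le' v1 v2 ν1 ν2 a b hν1 hν2 ha hb hab
  have e1 : (u1^2 + v1^2) / (2*ν1) = u1^2 / ν1 / 2 + v1^2 / ν1 / 2 := by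
    field_simp
  have e2 : (u2^2 + v2^2) / (2*ν2) = u2^2 / ν2 / 2 + v2^2 / ν2 / 2 := by
    field_simp
  have ec : ((a*u1 + b*u2)^2 + (a*v1 + b*v2)^2) / (2*(a*ν1 + b*ν2))
      = (a*u1 + b*u2)^2 / (a*ν1 + b*ν2) / 2 + (a*v1 + b*v2)^2 / (a*ν1 + b*ν2) / 2 := by
    field_simp
  rw [e1, e2, ec]
  nlinarith [hlog, hu, hv]

theorem dual_objective_concave (m h : ℕ) (hm : 1 ≤ m) (hh : 1 ≤ h)
    (θ : Fin (2 * m) → ℝ) (hθ : ∀ i, θ i ∈ Set.Icc (-Real.pi) Real.pi)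
    (S : Fin (2 * m) → ℝ) (hS : ∀ i, 0 < S i) (P : ℝ) :
    ConcaveOn ℝ
      {x : ℝ × (Fin h → ℝ) × ℝ × (Fin (2 * m) → ℝ) |
        0 < x.1 ∧ ∀ i, 0 < x.2.2.2 i ∧ 0 < 2 * x.1 * S i - x.2.2.2 i}
      (fun x =>
        (1 / (2 * (m : ℝ))) *
          ∑ i, ((1 / 2) * Real.log (2 * x.1 * S i - x.2.2.2 i)
            + x.1 * S i
            - ((2 * x.1 * S i + (∑ j, x.2.1 j * Real.cos (((j : ℕ) + 1 : ℝ) * θ i))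
                  + x.2.2.1) ^ 2
                + (∑ j, x.2.1 j * Real.sin (((j : ℕ) + 1 : ℝ) * θ i)) ^ 2)
                / (2 * x.2.2.2 i)
            - x.1 * P + x.2.2.1 + 1 / 2)) := by
  constructor
  · -- convexity of the domain
    intro x hx y hy a b ha hb hab
    simp only [Set.mem_setOf_eq, Prod.fst_add, Prod.snd_add, Prod.smul_fst, Prod.smul_snd,
      Pi.add_apply, Pi.smul_apply, smul_eq_mul] at hx hy ⊢
    refine ⟨convex_pos' a b x.1 y.1 ha hb hab hx.1 hy.1, fun i => ⟨?_, ?_⟩⟩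
    · exact convex_pos' a b _ _ ha hb hab (hx.2 i).1 (hy.2 i).1
    · have := convex_pos' a b _ _ ha hb hab (hx.2 i).2 (hy.2 i).2
      nlinarith [this]
  · intro x hx y hy a b ha hb hab
    simp only [Set.mem_setOf_eq] at hx hy
    simp only [smul_eq_mul, Prod.fst_add, Prod.snd_add, Prod.smul_fst, Prod.smul_snd,
      Pi.add_apply, Pi.smul_apply]
    have hc : (0:ℝ) ≤ 1 / (2 * (m:ℝ)) := by positivity
    have hsum : a * (∑ i, ((1 / 2) * Real.log (2 * x.1 * S i - x.2.2.2 i)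
            + x.1 * S i
            - ((2 * x.1 * S i + (∑ j, x.2.1 j * Real.cos (((j : ℕ) + 1 : ℝ) * θ i))
                  + x.2.2.1) ^ 2
                + (∑ j, x.2.1 j * Real.sin (((j : ℕ) + 1 : ℝ) * θ i)) ^ 2)
                / (2 * x.2.2.2 i)
            - x.1 * P + x.2.2.1 + 1 / 2))
        + b * (∑ i, ((1 / 2) * Real.log (2 * y.1 * S i - y.2.2.2 i)
            + y.1 * S i
            - ((2 * y.1 * S i + (∑ j, y.2.1 j * Real.cos (((j : ℕ) + 1 : ℝ) * θ i))
                  + y.2.2.1) ^ 2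
                + (∑ j, y.2.1 j * Real.sin (((j : ℕ) + 1 : ℝ) * θ i)) ^ 2)
                / (2 * y.2.2.2 i)
            - y.1 * P + y.2.2.1 + 1 / 2))
        ≤ ∑ i, ((1 / 2) * Real.log (2 * (a * x.1 + b * y.1) * S i
              - (a * x.2.2.2 i + b * y.2.2.2 i))
            + (a * x.1 + b * y.1) * S i
            - ((2 * (a * x.1 + b * y.1) * S i
                  + (∑ j, (a * x.2.1 j + b * y.2.1 j) * Real.cos (((j : ℕ) + 1 : ℝ) * θ i))
                  + (a * x.2.2.1 + b * y.2.2.1)) ^ 2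
                + (∑ j, (a * x.2.1 j + b * y.2.1 j) * Real.sin (((j : ℕ) + 1 : ℝ) * θ i)) ^ 2)
                / (2 * (a * x.2.2.2 i + b * y.2.2.2 i))
            - (a * x.1 + b * y.1) * P + (a * x.2.2.1 + b * y.2.2.1) + 1 / 2) := by
      rw [Finset.mul_sum, Finset.mul_sum, ← Finset.sum_add_distrib]
      refine Finset.sum_le_sum fun i _ => ?_
      have hcos : ∑ j, (a * x.2.1 j + b * y.2.1 j) * Real.cos (((j : ℕ) + 1 : ℝ) * θ i)
          = a * (∑ j, x.2.1 j * Real.cos (((j : ℕ) + 1 : ℝ) * θ i))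
            + b * (∑ j, y.2.1 j * Real.cos (((j : ℕ) + 1 : ℝ) * θ i)) := by
        rw [Finset.mul_sum, Finset.mul_sum, ← Finset.sum_add_distrib]
        exact Finset.sum_congr rfl fun j _ => by ring
      have hsin : ∑ j, (a * x.2.1 j + b * y.2.1 j) * Real.sin (((j : ℕ) + 1 : ℝ) * θ i)
          = a * (∑ j, x.2.1 j * Real.sin (((j : ℕ) + 1 : ℝ) * θ i))
            + b * (∑ j, y.2.1 j * Real.sin (((j : ℕ) + 1 : ℝ) * θ i)) := by
        rw [Finset.mul_sum, Finset.mul_sum, ← Finset.sum_add_distrib]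
        exact Finset.sum_congr rfl fun j _ => by ring
      rw [hcos, hsin]
      have hk := key' a b (x.2.2.2 i) (y.2.2.2 i)
        (2 * x.1 * S i - x.2.2.2 i) (2 * y.1 * S i - y.2.2.2 i)
        (2 * x.1 * S i + (∑ j, x.2.1 j * Real.cos (((j : ℕ) + 1 : ℝ) * θ i)) + x.2.2.1)
        (2 * y.1 * S i + (∑ j, y.2.1 j * Real.cos (((j : ℕ) + 1 : ℝ) * θ i)) + y.2.2.1)
        (∑ j, x.2.1 j * Real.sin (((j : ℕ) + 1 : ℝ) * θ i))
        (∑ j, y.2.1 j * Real.sin (((j : ℕ) + 1 : ℝ) * θ i))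
        (x.1 * S i - x.1 * P + x.2.2.1 + 1 / 2)
        (y.1 * S i - y.1 * P + y.2.2.1 + 1 / 2)
        ha hb hab (hx.2 i).1 (hy.2 i).1 (hx.2 i).2 (hy.2 i).2
      have harg : 2 * (a * x.1 + b * y.1) * S i - (a * x.2.2.2 i + b * y.2.2.2 i)
          = a * (2 * x.1 * S i - x.2.2.2 i) + b * (2 * y.1 * S i - y.2.2.2 i) := by ring
      rw [harg]
      calc _ = a * ((1/2) * Real.log (2 * x.1 * S i - x.2.2.2 i)
                + (x.1 * S i - x.1 * P + x.2.2.1 + 1 / 2)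
                - (((2 * x.1 * S i + (∑ j, x.2.1 j * Real.cos (((j : ℕ) + 1 : ℝ) * θ i)) + x.2.2.1))^2
                  + ((∑ j, x.2.1 j * Real.sin (((j : ℕ) + 1 : ℝ) * θ i)))^2) / (2 * x.2.2.2 i))
              + b * ((1/2) * Real.log (2 * y.1 * S i - y.2.2.2 i)
                + (y.1 * S i - y.1 * P + y.2.2.1 + 1 / 2)
                - (((2 * y.1 * S i + (∑ j, y.2.1 j * Real.cos (((j : ℕ) + 1 : ℝ) * θ i)) + y.2.2.1))^2
                  + ((∑ j, y.2.1 j * Real.sin (((j : ℕ) + 1 : ℝ) * θ i)))^2) / (2 * y.2.2.2 i)) := by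
            ring
        _ ≤ _ := hk
        _ = _ := by
            have h1 : a * (x.1 * S i - x.1 * P + x.2.2.1 + 1 / 2)
                + b * (y.1 * S i - y.1 * P + y.2.2.1 + 1 / 2)
                = (a * x.1 + b * y.1) * S i - (a * x.1 + b * y.1) * P
                  + (a * x.2.2.1 + b * y.2.2.1) + (a + b) * (1/2) := by ring
            rw [hab] at h1
            rw [h1]; ring
    calc a * (1 / (2 * (m:ℝ)) * _) + b * (1 / (2 * (m:ℝ)) * _)
        = 1 / (2 * (m:ℝ)) * (a * _ + b * _) := by ring
      _ ≤ 1 / (2 * (m:ℝ)) * _ := mul_le_mul_of_nonneg_left hsum hc
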